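/- Let v_1,…,v_d ∈ ℤ^n be all nonzero, let b ∈ ℤ^d, and let L_0 be the ideal of W = k[θ_1,…,θ_d] generated by the affine-linear polynomials {Σ_i u_i·θ_i + Σ_i u_i·b_i : u ∈ ℤ^d with Σ_i u_i·v_i = 0 in ℤ^n}. Then L_0 is a prime ideal, no polynomial of the form θ_i + m with m ∈ ℤ belongs to L_0, and consequently for any finite set I ⊆ {1,…,d}, any integers m_i (i ∈ I), and any g ∈ W, if (Π_{i∈I}(θ_i + m_i))·g ∈ L_0 then g ∈ L_0. (Core commutative-algebra step in the proof of Proposition 3.9: the product Π_{a_i<0}(θ_i + a_i + 1) is a non-zerodivisor modulo L_0 because L_0 is prime and θ_i = θ_ū would force v_i = 0.) -/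

import Mathlib

open MvPolynomial

/-- Let `L₀ ⊆ W = k[θ_1,…,θ_d]` be the ideal generated by the affine-linear polynomials
`Σ_i u_i θ_i + Σ_i u_i b_i` for `u ∈ ℤ^d` with `Σ_i u_i v_i = 0`, where all `v_i` are
nonzero.  Then `L₀` is prime, no `θ_i + m` (`m ∈ ℤ`) lies in `L₀`, and any product
`Π_{i∈I}(θ_i + m_i)` is a non-zerodivisor modulo `L₀`. -/
theorem L0_prime_and_theta_nonzerodivisor (k : Type) [Field k] [CharZero k] (d n : ℕ)
    (v : Fin d → Fin n → ℤ) (hv : ∀ i, v i ≠ 0) (b : Fin d → ℤ) :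
    let L0 : Ideal (MvPolynomial (Fin d) k) := Ideal.span {g | ∃ u : Fin d → ℤ,
      (∑ i, u i • v i) = 0 ∧ g = (∑ i, u i • X i) + C ((∑ i, u i * b i : ℤ) : k)}
    L0.IsPrime ∧
    (∀ (i : Fin d) (m : ℤ), X i + C ((m : ℤ) : k) ∉ L0) ∧
    (∀ (I : Finset (Fin d)) (m : Fin d → ℤ) (g : MvPolynomial (Fin d) k),
      (∏ i ∈ I, (X i + C ((m i : ℤ) : k))) * g ∈ L0 → g ∈ L0) := by
  intro L0
  classical
  set S : Set (MvPolynomial (Fin d) k) := {g | ∃ u : Fin d → ℤ,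
      (∑ i, u i • v i) = 0 ∧ g = (∑ i, u i • X i) + C ((∑ i, u i * b i : ℤ) : k)} with hS
  have hL0 : L0 = Ideal.span S := rfl
  -- the k-span of the (casted) integer relation vectors
  set S0 : Set (Fin d → k) := {w | ∃ u : Fin d → ℤ,
      (∑ i, u i • v i) = 0 ∧ w = fun i => (u i : k)} with hS0
  set Uk : Submodule k (Fin d → k) := Submodule.span k S0 with hUk
  -- the affine-linear map w ↦ Σ w_j X_j + Σ w_j b_j
  set AffL : (Fin d → k) →ₗ[k] MvPolynomial (Fin d) k :=
    { toFun := fun w => (∑ j, C (w j) * X j) + C (∑ j, w j * (b j : k))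
      map_add' := by
        intro w w'
        simp only [Pi.add_apply, map_add, add_mul, Finset.sum_add_distrib]
        ring
      map_smul' := by
        intro c w
        simp only [Pi.smul_apply, smul_eq_mul, RingHom.id_apply, MvPolynomial.smul_eq_C_mul,
          mul_add, Finset.mul_sum, map_mul, map_sum]
        ring_nf } with hAffL
  -- generators of L0 are exactly AffL of elements of S0
  have hgen : ∀ u : Fin d → ℤ,
      ((∑ i, u i • X i) + C ((∑ i, u i * b i : ℤ) : k) : MvPolynomial (Fin d) k)
        = AffL (fun i => (u i : k)) := by
    intro u
    have h1 : ((∑ i, u i * b i : ℤ) : k) = ∑ i, (u i : k) * (b i : k) := by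
      push_cast; rfl
    simp only [hAffL, LinearMap.coe_mk, AddHom.coe_mk, h1]
    congr 1
    refine Finset.sum_congr rfl fun i _ => ?_
    rw [zsmul_eq_mul, ← map_intCast (C : k →+* MvPolynomial (Fin d) k)]
  -- AffL maps Uk into L0
  have hUkL0 : ∀ w ∈ Uk, AffL w ∈ L0 := by
    intro w hw
    have : Uk ≤ Submodule.comap AffL (Submodule.restrictScalars k L0) := by
      rw [hUk, Submodule.span_le]
      rintro _ ⟨u, hu, rfl⟩
      simp only [Set.mem_preimage, SetLike.mem_coe, Submodule.mem_comap,
        Submodule.restrictScalars_mem]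
      rw [← hgen u, hL0]
      exact Ideal.subset_span ⟨u, hu, rfl⟩
    exact this hw
  -- Uk avoids the standard basis vectors (since v i ≠ 0)
  have hei : ∀ i : Fin d, (Pi.single i 1 : Fin d → k) ∉ Uk := by
    intro i hi
    set Tl : (Fin d → k) →ₗ[k] (Fin n → k) :=
      { toFun := fun w => ∑ l, w l • (fun j => (v l j : k))
        map_add' := by
          intro w w'
          simp [add_smul, Finset.sum_add_distrib]
        map_smul' := by
          intro c w
          simp [smul_smul, Finset.smul_sum] } with hTl
    have hker : Uk ≤ LinearMap.ker Tl := by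
      rw [hUk, Submodule.span_le]
      rintro _ ⟨u, hu, rfl⟩
      simp only [SetLike.mem_coe, LinearMap.mem_ker]
      funext j
      have hj := congrFun hu j
      simp only [Finset.sum_apply, Pi.smul_apply, smul_eq_mul, Pi.zero_apply] at hj
      simp only [hTl, LinearMap.coe_mk, AddHom.coe_mk, Finset.sum_apply, Pi.smul_apply,
        smul_eq_mul, Pi.zero_apply]
      have : ((∑ l, u l * v l j : ℤ) : k) = 0 := by rw [hj]; simp
      push_cast at this
      exact this
    have h0 : Tl (Pi.single i 1) = 0 := hker hi
    have : ∀ j, (v i j : k) = 0 := by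
      intro j
      have := congrFun h0 j
      simp only [hTl, LinearMap.coe_mk, AddHom.coe_mk, Finset.sum_apply, Pi.smul_apply,
        smul_eq_mul, Pi.zero_apply] at this
      rw [Finset.sum_eq_single i] at this
      · simpa using this
      · intro l _ hl
        simp [Pi.single_apply, hl]
      · simp
    exact hv i (funext fun j => by exact_mod_cast this j)
  -- choose a projection P onto Uk
  obtain ⟨Ck, hcompl⟩ := Submodule.exists_isCompl Uk
  set P : (Fin d → k) →ₗ[k] (Fin d → k) :=
    Uk.subtype ∘ₗ Uk.projectionOnto Ck hcompl with hP
  have hPmem : ∀ w, P w ∈ Uk := fun w => (Uk.projectionOnto Ck hcompl w).2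
  have hPid : ∀ w ∈ Uk, P w = w := by
    intro w hw
    simp only [hP, LinearMap.comp_apply, Submodule.subtype_apply]
    rw [show w = ((⟨w, hw⟩ : Uk) : Fin d → k) from rfl,
      Submodule.linearProjOfIsCompl_apply_left hcompl]
  -- the retraction σ
  set σ : MvPolynomial (Fin d) k →ₐ[k] MvPolynomial (Fin d) k :=
    aeval (fun i => X i - AffL (P (Pi.single i 1))) with hσ
  have hσX : ∀ i, σ (X i) = X i - AffL (P (Pi.single i 1)) := fun i => aeval_X _ i
  have hσC : ∀ a : k, σ (C a) = C a := fun a => aeval_C _ a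
  -- σ on affine forms: σ (AffL w) = AffL w - AffL (P w)
  have hsum : ∀ w : Fin d → k, (∑ j, w j • (Pi.single j 1 : Fin d → k)) = w := by
    intro w
    ext l
    simp [Pi.single_apply, Finset.sum_apply, mul_ite, Finset.sum_ite_eq]
  have hσAff : ∀ w : Fin d → k, σ (AffL w) = AffL w - AffL (P w) := by
    intro w
    have h1 : σ (AffL w) = (∑ j, C (w j) * (X j - AffL (P (Pi.single j 1))))
        + C (∑ j, w j * (b j : k)) := by
      simp only [hAffL, LinearMap.coe_mk, AddHom.coe_mk, map_add, map_sum, map_mul, hσC, hσX]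
    rw [h1]
    have h2 : ∑ j, C (w j) * AffL (P (Pi.single j 1)) = AffL (P w) := by
      have : ∀ j, C (w j) * AffL (P (Pi.single j 1)) = w j • (AffL ∘ₗ P) (Pi.single j 1) := by
        intro j
        simp [MvPolynomial.smul_eq_C_mul]
      simp_rw [this, ← map_smul, ← map_sum, hsum w]
      simp
    simp only [mul_sub, Finset.sum_sub_distrib]
    rw [h2]
    simp only [hAffL, LinearMap.coe_mk, AddHom.coe_mk]
    ring
  -- σ kills the generators
  have hσS : ∀ g ∈ S, σ g = 0 := by
    rintro _ ⟨u, hu, rfl⟩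
    rw [hgen u, hσAff, hPid _ (Submodule.subset_span ⟨u, hu, rfl⟩), sub_self]
  have hL0ker : L0 ≤ RingHom.ker (σ : MvPolynomial (Fin d) k →+* MvPolynomial (Fin d) k) := by
    rw [hL0, Ideal.span_le]
    intro g hg
    simpa [RingHom.mem_ker] using hσS g hg
  -- f - σ f ∈ L0 for every f
  have hdiff : ∀ f : MvPolynomial (Fin d) k, f - σ f ∈ L0 := by
    intro f
    induction f using MvPolynomial.induction_on with
    | C a => rw [hσC, sub_self]; exact L0.zero_mem
    | add p q hp hq =>
        rw [map_add, show p + q - (σ p + σ q) = (p - σ p) + (q - σ q) by ring]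
        exact L0.add_mem hp hq
    | mul_X p i hp =>
        rw [map_mul, hσX i,
          show p * X i - σ p * (X i - AffL (P (Pi.single i 1)))
            = (p - σ p) * X i + σ p * AffL (P (Pi.single i 1)) by ring]
        exact L0.add_mem (L0.mul_mem_right _ hp)
          (L0.mul_mem_left _ (hUkL0 _ (hPmem (Pi.single i 1))))
  have hkerL0 : L0 = RingHom.ker (σ : MvPolynomial (Fin d) k →+* MvPolynomial (Fin d) k) := by
    refine le_antisymm hL0ker fun f hf => ?_
    have h0 : σ f = 0 := hf
    have := hdiff f
    rwa [h0, sub_zero] at this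
  have hprime : L0.IsPrime := hkerL0 ▸ RingHom.ker_isPrime _
  -- part 2
  have hX : ∀ (i : Fin d) (m : ℤ), X i + C ((m : ℤ) : k) ∉ L0 := by
    intro i m hmem
    have h0 : σ (X i + C ((m : ℤ) : k)) = 0 := hL0ker hmem
    rw [map_add, hσX i, hσC] at h0
    -- w := P (single i 1) ∈ Uk, and single i 1 ∉ Uk, so they differ somewhere
    set w : Fin d → k := P (Pi.single i 1) with hw
    have hne : w ≠ Pi.single i 1 := by
      intro h
      exact hei i (h ▸ hPmem (Pi.single i 1))
    obtain ⟨j, hj⟩ : ∃ j, w j ≠ (Pi.single i 1 : Fin d → k) j := by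
      by_contra h
      push_neg at h
      exact hne (funext h)
    have hc := congrArg (coeff (Finsupp.single j 1)) h0
    have hXc : ∀ l : Fin d, coeff (Finsupp.single j 1) (X l : MvPolynomial (Fin d) k)
        = if l = j then 1 else 0 := by
      intro l
      rw [coeff_X']
      simp only [Finsupp.single_left_inj (one_ne_zero (α := ℕ))]
    have haffc : coeff (Finsupp.single j 1) (AffL w) = w j := by
      simp only [hAffL, LinearMap.coe_mk, AddHom.coe_mk, coeff_add, MvPolynomial.coeff_sum,
        coeff_C_mul, hXc, coeff_C, mul_ite, mul_one, mul_zero, Finset.sum_ite_eq',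
        Finset.mem_univ, if_true]
      rw [if_neg (by simp [eq_comm, Finsupp.single_eq_zero]), add_zero]
    have hne0 : (0 : Fin d →₀ ℕ) ≠ Finsupp.single j 1 := by simp [eq_comm]
    simp only [coeff_add, coeff_sub, coeff_zero, haffc, hXc i, coeff_C, if_neg hne0,
      add_zero] at hc
    have hwj : w j = if i = j then (1:k) else 0 := by
      by_cases hij : i = j
      · rw [if_pos hij]
        rw [if_pos hij, sub_eq_zero] at hc
        exact hc.symm
      · rw [if_neg hij]
        rw [if_neg hij, sub_eq_zero] at hc
        exact hc.symm
    apply hj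
    rw [Pi.single_apply, hwj]
    by_cases hij : i = j
    · simp [hij]
    · rw [if_neg hij, if_neg (fun h => hij h.symm)]
  refine ⟨hprime, hX, ?_⟩
  -- part 3
  intro I m g
  induction I using Finset.induction_on with
  | empty =>
      intro h
      rwa [Finset.prod_empty, one_mul] at h
  | insert a s ha ih =>
      intro h
      rw [Finset.prod_insert ha, mul_assoc] at h
      exact ih ((hprime.mem_or_mem h).resolve_left (hX _ _))
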